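/- Let 0 < H < 1/2, T > 0 and γ > 1/2 − H. If φ : [0,T] → ℝ satisfies |φ(t) − φ(s)| ≤ M |t−s|^γ for all s,t ∈ [0,T] and some constant M, then ‖φ‖_K² < ∞, i.e. both integrals ∫_0^T φ(s)²[(T−s)^{2H−1}+s^{2H−1}] ds and ∫_0^T ( ∫_s^T |φ(t)−φ(s)|(t−s)^{H−3/2} dt )² ds are finite. (In particular every γ-Hölder continuous function on [0,T] belongs to the Hilbert space associated with fractional Brownian motion of Hurst parameter H.) -/

import Mathlib

open MeasureTheory Real
open scoped ENNReal

private lemma lint_rpow_lt_top {T c p : ℝ} (hT : 0 < T) (hp : -1 < p) :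
    ∫⁻ u in Set.Ioo 0 T, ENNReal.ofReal (c * u ^ p) < ⊤ := by
  have h : IntervalIntegrable (fun u : ℝ => u ^ p) volume 0 T := intervalIntegral.intervalIntegrable_rpow' hp
  have h2 : IntegrableOn (fun u : ℝ => u ^ p) (Set.Ioc 0 T) :=
    (intervalIntegrable_iff_integrableOn_Ioc_of_le hT.le).mp h
  have h2' : IntegrableOn (fun u : ℝ => c * u ^ p) (Set.Ioc 0 T) := h2.const_mul c
  have h3 : IntegrableOn (fun u : ℝ => c * u ^ p) (Set.Ioo 0 T) :=
    h2'.mono_set Set.Ioo_subset_Ioc_self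
  exact h3.setLIntegral_lt_top

private lemma lint_shift (f : ℝ → ℝ≥0∞) (s T : ℝ) :
    ∫⁻ t in Set.Ioo s T, f (t - s) = ∫⁻ u in Set.Ioo 0 (T - s), f u := by
  rw [← lintegral_indicator measurableSet_Ioo, ← lintegral_indicator measurableSet_Ioo]
  have key : ∀ t, (Set.Ioo s T).indicator (fun t => f (t - s)) t
      = (Set.Ioo 0 (T - s)).indicator f (t - s) := by
    intro t
    by_cases ht : t ∈ Set.Ioo s T
    · rw [Set.indicator_of_mem ht,
        Set.indicator_of_mem (Set.mem_Ioo.mpr ⟨by linarith [ht.1], by linarith [ht.2]⟩)]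
    · rw [Set.indicator_of_notMem ht, Set.indicator_of_notMem]
      intro hmem
      exact ht ⟨by linarith [hmem.1], by linarith [hmem.2]⟩
  simp_rw [key]
  exact lintegral_sub_right_eq_self ((Set.Ioo 0 (T - s)).indicator f) s

private lemma lint_comp_neg (f : ℝ → ℝ≥0∞) : ∫⁻ x, f (-x) = ∫⁻ x, f x :=
  ((Measure.measurePreserving_neg (volume : Measure ℝ)).lintegral_map_equiv f
    (MeasurableEquiv.neg ℝ)).symm

private lemma lint_reflect (f : ℝ → ℝ≥0∞) (T : ℝ) :
    ∫⁻ s in Set.Ioo 0 T, f (T - s) = ∫⁻ u in Set.Ioo 0 T, f u := by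
  rw [← lintegral_indicator measurableSet_Ioo, ← lintegral_indicator measurableSet_Ioo]
  set g : ℝ → ℝ≥0∞ := (Set.Ioo 0 T).indicator f with hg
  have key : ∀ t, (Set.Ioo 0 T).indicator (fun s => f (T - s)) t = g (T - t) := by
    intro t
    by_cases ht : t ∈ Set.Ioo 0 T
    · rw [Set.indicator_of_mem ht, hg,
        Set.indicator_of_mem (Set.mem_Ioo.mpr ⟨by linarith [ht.2], by linarith [ht.1]⟩)]
    · rw [Set.indicator_of_notMem ht, hg, Set.indicator_of_notMem]
      intro hmem
      exact ht ⟨by linarith [hmem.2], by linarith [hmem.1]⟩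
  simp_rw [key]
  calc ∫⁻ t, g (T - t) = ∫⁻ t, (fun y => g (T + y)) (-t) := by
        simp_rw [sub_eq_add_neg]
    _ = ∫⁻ y, g (T + y) := lint_comp_neg (fun y => g (T + y))
    _ = ∫⁻ y, g y := lintegral_add_left_eq_self g T

/-- The square `‖φ‖_K²` of the seminorm `‖·‖_K`, as a Lebesgue integral with values in `[0,∞]`:
`∫_0^T φ(s)²[(T-s)^{2H-1}+s^{2H-1}] ds
  + ∫_0^T ( ∫_s^T |φ(t)-φ(s)| (t-s)^{H-3/2} dt )² ds`. -/
noncomputable def normKsq (H T : ℝ) (φ : ℝ → ℝ) : ENNReal :=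
  (∫⁻ s in Set.Ioo 0 T, ENNReal.ofReal (φ s ^ 2 * ((T - s) ^ (2 * H - 1) + s ^ (2 * H - 1)))) +
  ∫⁻ s in Set.Ioo 0 T,
    (∫⁻ t in Set.Ioo s T, ENNReal.ofReal (|φ t - φ s| * (t - s) ^ (H - 3 / 2))) ^ 2

/-- if `0 < H < 1/2`, `T > 0`, `γ > 1/2 - H` and `φ : [0,T] → ℝ` is `γ`-Hölder
continuous, i.e. `|φ(t) - φ(s)| ≤ M |t-s|^γ` on `[0,T]`, then `‖φ‖_K² < ∞`; in particular every
`γ`-Hölder continuous function on `[0,T]` belongs to the Hilbert space `𝓗` associated with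
fractional Brownian motion with Hurst parameter `H`. -/
theorem holder_mem_HK (H T γ M : ℝ) (hH0 : 0 < H) (hH : H < 1 / 2) (hT : 0 < T)
    (hγ : 1 / 2 - H < γ) (φ : ℝ → ℝ)
    (hφ : ∀ s ∈ Set.Icc (0:ℝ) T, ∀ t ∈ Set.Icc (0:ℝ) T, |φ t - φ s| ≤ M * |t - s| ^ γ) :
    normKsq H T φ < ⊤ := by
  have hγ0 : 0 < γ := by linarith
  have hM : 0 ≤ M := by
    have h1 := hφ 0 ⟨le_rfl, hT.le⟩ T ⟨hT.le, le_rfl⟩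
    have h2 : (0:ℝ) < |T - 0| ^ γ := Real.rpow_pos_of_pos (by rw [sub_zero, abs_of_pos hT]; exact hT) γ
    nlinarith [abs_nonneg (φ T - φ 0)]
  set C : ℝ := |φ 0| + M * T ^ γ with hC
  have hφbound : ∀ s ∈ Set.Ioo (0:ℝ) T, φ s ^ 2 ≤ C ^ 2 := by
    intro s hs
    have h1 : |φ s| ≤ C := by
      have h2 := hφ 0 ⟨le_rfl, hT.le⟩ s ⟨hs.1.le, hs.2.le⟩
      have h3 : |s - 0| ^ γ ≤ T ^ γ := by
        rw [sub_zero, abs_of_pos hs.1]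
        exact Real.rpow_le_rpow hs.1.le hs.2.le hγ0.le
      have h4 : |φ s| ≤ |φ s - φ 0| + |φ 0| := by
        calc |φ s| = |(φ s - φ 0) + φ 0| := by ring_nf
          _ ≤ |φ s - φ 0| + |φ 0| := abs_add_le _ _
      have h5 : M * |s - 0| ^ γ ≤ M * T ^ γ := mul_le_mul_of_nonneg_left h3 hM
      rw [hC]; linarith
    calc φ s ^ 2 = |φ s| ^ 2 := (sq_abs _).symm
      _ ≤ C ^ 2 := pow_le_pow_left₀ (abs_nonneg _) h1 2
  have ha : (-1:ℝ) < 2 * H - 1 := by linarith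
  -- Part 1
  have hpart1 : (∫⁻ s in Set.Ioo 0 T,
      ENNReal.ofReal (φ s ^ 2 * ((T - s) ^ (2 * H - 1) + s ^ (2 * H - 1)))) < ⊤ := by
    have hb : ∫⁻ s in Set.Ioo 0 T,
        ENNReal.ofReal (φ s ^ 2 * ((T - s) ^ (2 * H - 1) + s ^ (2 * H - 1)))
        ≤ ∫⁻ s in Set.Ioo 0 T,
          (ENNReal.ofReal (C ^ 2 * (T - s) ^ (2 * H - 1))
            + ENNReal.ofReal (C ^ 2 * s ^ (2 * H - 1))) := by
      apply lintegral_mono_ae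
      filter_upwards [ae_restrict_mem measurableSet_Ioo] with s hs
      refine le_trans ?_ (ENNReal.ofReal_add_le)
      apply ENNReal.ofReal_le_ofReal
      have hx : (0:ℝ) ≤ (T - s) ^ (2 * H - 1) := Real.rpow_nonneg (by linarith [hs.2]) _
      have hy : (0:ℝ) ≤ s ^ (2 * H - 1) := Real.rpow_nonneg hs.1.le _
      have hb2 := hφbound s hs
      have hnn : (0:ℝ) ≤ φ s ^ 2 := sq_nonneg _
      nlinarith
    have hmeas : Measurable fun s : ℝ => ENNReal.ofReal (C ^ 2 * (T - s) ^ (2 * H - 1)) := by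
      fun_prop
    rw [lintegral_add_left hmeas] at hb
    have h1 : ∫⁻ s in Set.Ioo 0 T, ENNReal.ofReal (C ^ 2 * (T - s) ^ (2 * H - 1)) < ⊤ := by
      rw [lint_reflect (fun u => ENNReal.ofReal (C ^ 2 * u ^ (2 * H - 1))) T]
      exact lint_rpow_lt_top hT ha
    have h2 : ∫⁻ s in Set.Ioo 0 T, ENNReal.ofReal (C ^ 2 * s ^ (2 * H - 1)) < ⊤ :=
      lint_rpow_lt_top hT ha
    exact lt_of_le_of_lt hb (ENNReal.add_lt_top.mpr ⟨h1, h2⟩)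
  -- Part 2
  set p : ℝ := γ + (H - 3 / 2) with hp'
  have hp : (-1:ℝ) < p := by rw [hp']; linarith
  set K : ℝ≥0∞ := ∫⁻ u in Set.Ioo 0 T, ENNReal.ofReal (M * u ^ p) with hK'
  have hK : K < ⊤ := lint_rpow_lt_top hT hp
  have hinner : ∀ s ∈ Set.Ioo (0:ℝ) T,
      (∫⁻ t in Set.Ioo s T, ENNReal.ofReal (|φ t - φ s| * (t - s) ^ (H - 3 / 2))) ≤ K := by
    intro s hs
    have step1 : (∫⁻ t in Set.Ioo s T, ENNReal.ofReal (|φ t - φ s| * (t - s) ^ (H - 3 / 2)))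
        ≤ ∫⁻ t in Set.Ioo s T, ENNReal.ofReal (M * (t - s) ^ p) := by
      apply lintegral_mono_ae
      filter_upwards [ae_restrict_mem measurableSet_Ioo] with t ht
      apply ENNReal.ofReal_le_ofReal
      have hts : 0 < t - s := sub_pos.mpr ht.1
      have h1 : |φ t - φ s| ≤ M * (t - s) ^ γ := by
        have h2 := hφ s ⟨hs.1.le, hs.2.le⟩ t ⟨(hs.1.trans ht.1).le, ht.2.le⟩
        rwa [abs_of_pos hts] at h2
      calc |φ t - φ s| * (t - s) ^ (H - 3 / 2)
          ≤ (M * (t - s) ^ γ) * (t - s) ^ (H - 3 / 2) :=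
            mul_le_mul_of_nonneg_right h1 (Real.rpow_nonneg hts.le _)
        _ = M * (t - s) ^ p := by rw [mul_assoc, ← Real.rpow_add hts]
    have step2 : (∫⁻ t in Set.Ioo s T, ENNReal.ofReal (M * (t - s) ^ p))
        = ∫⁻ u in Set.Ioo 0 (T - s), ENNReal.ofReal (M * u ^ p) :=
      lint_shift (fun u => ENNReal.ofReal (M * u ^ p)) s T
    have step3 : (∫⁻ u in Set.Ioo 0 (T - s), ENNReal.ofReal (M * u ^ p)) ≤ K :=
      lintegral_mono_set (Set.Ioo_subset_Ioo_right (by linarith [hs.1]))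
    exact step1.trans (step2 ▸ step3)
  have hpart2 : (∫⁻ s in Set.Ioo 0 T,
      (∫⁻ t in Set.Ioo s T, ENNReal.ofReal (|φ t - φ s| * (t - s) ^ (H - 3 / 2))) ^ 2) < ⊤ := by
    calc (∫⁻ s in Set.Ioo 0 T,
        (∫⁻ t in Set.Ioo s T, ENNReal.ofReal (|φ t - φ s| * (t - s) ^ (H - 3 / 2))) ^ 2)
        ≤ ∫⁻ _ in Set.Ioo 0 T, K ^ 2 := by
          apply lintegral_mono_ae
          filter_upwards [ae_restrict_mem measurableSet_Ioo] with s hs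
          exact pow_le_pow_left₀ (zero_le) (hinner s hs) 2
      _ = K ^ 2 * volume (Set.Ioo 0 T) := setLIntegral_const _ _
      _ < ⊤ := ENNReal.mul_lt_top (ENNReal.pow_lt_top hK) (by simp)
  unfold normKsq
  exact ENNReal.add_lt_top.mpr ⟨hpart1, hpart2⟩
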